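/- Let P be an m×m1 matrix (m = m1+m2) with P*P > 0 and P* j P ≥ 0, where j = diag(I_{m1}, -I_{m2}). Write P = [P₁; P₂] with P₁ of size m1×m1 and P₂ of size m2×m1. Then P₁ is invertible, and φ := P₂ P₁⁻¹ satisfies φ*φ ≤ I_{m1} (i.e., φ is a contraction). -/

import Mathlib

open Matrix
open scoped ComplexOrder

theorem stmt_8 (m₁ m₂ : ℕ)
    (j : Matrix (Fin m₁ ⊕ Fin m₂) (Fin m₁ ⊕ Fin m₂) ℂ)
    (hj : j = Matrix.fromBlocks 1 0 0 (-1))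
    (P : Matrix (Fin m₁ ⊕ Fin m₂) (Fin m₁) ℂ)
    (hP1 : (Pᴴ * P).PosDef) (hP2 : (Pᴴ * j * P).PosSemidef)
    (P₁ : Matrix (Fin m₁) (Fin m₁) ℂ) (P₂ : Matrix (Fin m₂) (Fin m₁) ℂ)
    (hP₁ : P₁ = P.submatrix Sum.inl id) (hP₂ : P₂ = P.submatrix Sum.inr id) :
    P₁.det ≠ 0 ∧
      ((1 : Matrix (Fin m₁) (Fin m₁) ℂ) - (P₂ * P₁⁻¹)ᴴ * (P₂ * P₁⁻¹)).PosSemidef := by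
  have hPr : P = fromRows P₁ P₂ := by
    subst hP₁ hP₂
    ext (i | i) k <;> simp
  have hjP : j * P = fromRows P₁ (-P₂) := by
    rw [hj, hPr]
    ext (i | i) k <;>
      simp [mul_apply, fromBlocks, Fintype.sum_sum_type, one_apply]
  have key1 : Pᴴ * P = P₁ᴴ * P₁ + P₂ᴴ * P₂ := by
    rw [hPr, conjTranspose_fromRows_eq_fromCols_conjTranspose,
      fromCols_mul_fromRows]
  have key2 : Pᴴ * j * P = P₁ᴴ * P₁ - P₂ᴴ * P₂ := by
    rw [Matrix.mul_assoc, hjP, hPr, conjTranspose_fromRows_eq_fromCols_conjTranspose,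
      fromCols_mul_fromRows, Matrix.mul_neg, ← sub_eq_add_neg]
  have hsum : (P₁ᴴ * P₁ + P₁ᴴ * P₁).PosDef := by
    have := hP1.add_posSemidef hP2
    rw [key1, key2] at this
    convert this using 1
    abel
  have hPD : (P₁ᴴ * P₁).PosDef := by
    refine PosDef.of_dotProduct_mulVec_pos (posSemidef_conjTranspose_mul_self P₁).isHermitian fun x hx => ?_
    have h := hsum.dotProduct_mulVec_pos hx
    rw [add_mulVec, dotProduct_add] at h
    have h2 : (0:ℂ) < 2 * (star x ⬝ᵥ (P₁ᴴ * P₁) *ᵥ x) := by rwa [two_mul]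
    have : (0:ℂ) < (2:ℂ)⁻¹ * (2 * (star x ⬝ᵥ (P₁ᴴ * P₁) *ᵥ x)) := by
      apply mul_pos _ h2
      rw [Complex.pos_iff]; norm_num
    rwa [← mul_assoc, inv_mul_cancel₀ (by norm_num), one_mul] at this
  have hdet : P₁.det ≠ 0 := by
    intro h
    have := hPD.det_pos.ne'
    rw [det_mul, det_conjTranspose, h, star_zero, zero_mul] at this
    exact this rfl
  refine ⟨hdet, ?_⟩
  have hinv : P₁ * P₁⁻¹ = 1 := mul_nonsing_inv P₁ (isUnit_iff_ne_zero.mpr hdet)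
  have h1 : (P₁⁻¹)ᴴ * (P₁ᴴ * P₁) * P₁⁻¹ = 1 := by
    rw [← Matrix.mul_assoc, ← conjTranspose_mul, hinv, conjTranspose_one, one_mul, hinv]
  have hid : (1 : Matrix (Fin m₁) (Fin m₁) ℂ) - (P₂ * P₁⁻¹)ᴴ * (P₂ * P₁⁻¹)
      = (P₁⁻¹)ᴴ * (Pᴴ * j * P) * P₁⁻¹ := by
    rw [key2, Matrix.mul_sub, Matrix.sub_mul, h1]
    congr 1
    rw [conjTranspose_mul]
    simp only [Matrix.mul_assoc]
  rw [hid]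
  exact hP2.conjTranspose_mul_mul_same P₁⁻¹
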